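/- Let L be a finitary first-order language that is purely monadic (its only symbols are unary relation symbols; it has no function symbols and no constant symbols). Then for every L-sentence φ (equality allowed), there is an L-sentence χ expressing θ(φ): for every nonempty L-structure A, A ⊨ χ iff some nonempty substructure of A satisfies φ. In other words, L_{ω,ω} over a purely monadic signature is closed under θ. -/

import Mathlib

/- STATEMENT 11: For a purely monadic finitary first-order language L (only unary
relation symbols), every L-sentence φ (equality allowed) has an L-sentence χ
expressing θ(φ): L_{ω,ω} over a purely monadic signature is closed under θ. -/

open FirstOrder Language

universe u v

universe w w'

namespace ThetaMonadic
open FirstOrder.Language.BoundedFormula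
variable {L : FirstOrder.Language.{u, v}}

def depth : ∀ {n}, L.BoundedFormula Empty n → ℕ
  | _, .falsum => 0
  | _, .equal _ _ => 0
  | _, .rel _ _ => 0
  | _, .imp f g => max (depth f) (depth g)
  | _, .all f => depth f + 1

def rels1 : ∀ {n}, L.BoundedFormula Empty n → Set (L.Relations 1)
  | _, .falsum => ∅
  | _, .equal _ _ => ∅
  | _, @BoundedFormula.rel _ _ _ 1 R _ => {R}
  | _, @BoundedFormula.rel _ _ _ 0 _ _ => ∅
  | _, @BoundedFormula.rel _ _ _ (_+2) _ _ => ∅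
  | _, .imp f g => rels1 f ∪ rels1 g
  | _, .all f => rels1 f

variable (P : Set (L.Relations 1))

def col (M : Type w) [L.Structure M] (a : M) : ↥P → Prop :=
  fun p => Structure.RelMap (p : L.Relations 1) ![a]

def HasAtLeast (M : Type w) [L.Structure M] (c : ↥P → Prop) (k : ℕ) : Prop :=
  ∃ f : Fin k → M, Function.Injective f ∧ ∀ i, col P M (f i) = c


theorem rels1_finite : ∀ {n} (ψ : L.BoundedFormula Empty n), (rels1 ψ).Finite
  | _, .falsum => Set.finite_empty
  | _, .equal _ _ => Set.finite_empty
  | _, @BoundedFormula.rel _ _ _ 1 R _ => Set.finite_singleton R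
  | _, @BoundedFormula.rel _ _ _ 0 _ _ => Set.finite_empty
  | _, @BoundedFormula.rel _ _ _ (_+2) _ _ => Set.finite_empty
  | _, .imp f g => (rels1_finite f).union (rels1_finite g)
  | _, .all f => rels1_finite f

theorem hasAtLeast_zero (M : Type w) [L.Structure M] (c : ↥P → Prop) :
    HasAtLeast P M c 0 :=
  ⟨Fin.elim0, fun i => i.elim0, fun i => i.elim0⟩

theorem hasAtLeast_mono {M : Type w} [L.Structure M] {c : ↥P → Prop} {k k' : ℕ}
    (h : HasAtLeast P M c k) (hk : k' ≤ k) : HasAtLeast P M c k' := by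
  obtain ⟨f, hf, hc⟩ := h
  exact ⟨f ∘ Fin.castLE hk, hf.comp (Fin.castLE_injective hk), fun i => hc _⟩

theorem term_eq_var [L.IsRelational] {α : Type*} (t : L.Term α) : ∃ x, t = Term.var x := by
  cases t with
  | var x => exact ⟨x, rfl⟩
  | func f _ => exact isEmptyElim f

theorem extend {M : Type w} {M' : Type w'} [L.Structure M] [L.Structure M'] {N : ℕ}
    (hcount : ∀ c : ↥P → Prop, ∀ k ≤ N, HasAtLeast P M c k ↔ HasAtLeast P M' c k)
    {n : ℕ} (hn : n + 1 ≤ N) (v : Fin n → M) (v' : Fin n → M')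
    (hcol : ∀ i, col P M (v i) = col P M' (v' i))
    (hpat : ∀ i j, v i = v j ↔ v' i = v' j)
    (a : M) :
    ∃ a' : M', col P M a = col P M' a' ∧ (∀ i, a = v i ↔ a' = v' i) := by
  classical
  by_cases h : ∃ i, a = v i
  · obtain ⟨i, rfl⟩ := h
    exact ⟨v' i, hcol i, fun j => hpat i j⟩
  · push_neg at h
    set c : ↥P → Prop := col P M a with hc
    set s : Finset (Fin n) := Finset.univ.filter (fun i => col P M (v i) = c) with hs
    set t : Finset M := s.image v with ht
    set t' : Finset M' := s.image v' with ht'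
    have hcard : t.card = t'.card := by
      refine Finset.card_bij (fun x hx => v' (Finset.mem_image.mp hx).choose) ?_ ?_ ?_
      · intro x hx
        exact Finset.mem_image_of_mem v' (Finset.mem_image.mp hx).choose_spec.1
      · intro x hx y hy hxy
        have h1 := (Finset.mem_image.mp hx).choose_spec.2
        have h2 := (Finset.mem_image.mp hy).choose_spec.2
        rw [← h1, ← h2]
        exact (hpat _ _).mpr hxy
      · intro y hy
        obtain ⟨j, hj, rfl⟩ := Finset.mem_image.mp hy
        refine ⟨v j, Finset.mem_image_of_mem v hj, ?_⟩
        exact (hpat _ _).mp (Finset.mem_image.mp (Finset.mem_image_of_mem v hj)).choose_spec.2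
    have hanot : a ∉ t := by
      intro ha
      obtain ⟨i, _, hi⟩ := Finset.mem_image.mp ha
      exact h i hi.symm
    set k : ℕ := t.card + 1 with hk
    have hkN : k ≤ N := by
      have h1 : t.card ≤ s.card := Finset.card_image_le
      have h2 : s.card ≤ n := by
        simpa using Finset.card_filter_le Finset.univ (fun i => col P M (v i) = c)
      omega
    have hM : HasAtLeast P M c k := by
      set u : Finset M := insert a t with hu
      have hcu : u.card = k := by rw [hu, Finset.card_insert_of_notMem hanot]
      refine ⟨Subtype.val ∘ u.equivFin.symm ∘ Fin.cast hcu.symm, ?_, ?_⟩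
      · exact Subtype.val_injective.comp (u.equivFin.symm.injective.comp (Fin.cast_injective hcu.symm))
      · intro i
        have hx : ((u.equivFin.symm (Fin.cast hcu.symm i)) : M) ∈ u := (u.equivFin.symm _).2
        rcases Finset.mem_insert.mp hx with hx | hx
        · rw [Function.comp_apply, Function.comp_apply, hx, hc]
        · obtain ⟨j, hj, hji⟩ := Finset.mem_image.mp hx
          have := (Finset.mem_filter.mp hj).2
          simpa [Function.comp, hji] using (hji ▸ this : _)
    obtain ⟨f, hfinj, hfc⟩ := (hcount c k hkN).mp hM
    have hexists : ∃ j, ∀ i, f j ≠ v' i := by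
      by_contra hcon
      push_neg at hcon
      have himg : ∀ j, f j ∈ t' := by
        intro j
        obtain ⟨i, hi⟩ := hcon j
        have hci : col P M (v i) = c := by rw [hcol i, ← hi, hfc j]
        exact hi ▸ Finset.mem_image_of_mem v' (Finset.mem_filter.mpr ⟨Finset.mem_univ i, hci⟩)
      have : k ≤ t'.card := by
        have := Fintype.card_le_of_injective (fun j : Fin k => (⟨f j, himg j⟩ : ↥t'))
          (fun x y hxy => hfinj (congrArg Subtype.val hxy))
        simpa using this
      omega
    obtain ⟨j, hj⟩ := hexists
    refine ⟨f j, by rw [hfc j], fun i => ?_⟩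
    simp [h i, hj i]



theorem snoc_col {M : Type w} {M' : Type w'} [L.Structure M] [L.Structure M'] {n}
    {v : Fin n → M} {v' : Fin n → M'} {a : M} {a' : M'}
    (hcol : ∀ i, col P M (v i) = col P M' (v' i)) (hca : col P M a = col P M' a') :
    ∀ i : Fin (n+1), col P M ((Fin.snoc v a : Fin (n+1) → M) i) = col P M' ((Fin.snoc v' a' : Fin (n+1) → M') i) := by
  intro i
  induction i using Fin.lastCases with
  | last => simpa using hca
  | cast i => simpa using hcol i

theorem snoc_pat {M : Type w} {M' : Type w'} {n} {v : Fin n → M} {v' : Fin n → M'}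
    {a : M} {a' : M'}
    (hpat : ∀ i j, v i = v j ↔ v' i = v' j)
    (hpa : ∀ i, a = v i ↔ a' = v' i) :
    ∀ i j : Fin (n+1), (Fin.snoc v a : Fin (n+1) → M) i = (Fin.snoc v a : Fin (n+1) → M) j ↔ (Fin.snoc v' a' : Fin (n+1) → M') i = (Fin.snoc v' a' : Fin (n+1) → M') j := by
  intro i j
  induction i using Fin.lastCases with
  | last =>
    induction j using Fin.lastCases with
    | last => simp
    | cast j => simpa using hpa j
  | cast i =>
    induction j using Fin.lastCases with
    | last => simp only [Fin.snoc_last, Fin.snoc_castSucc, eq_comm]; exact hpa i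
    | cast j => simpa using hpat i j

theorem invariance [L.IsRelational] (hmon : ∀ n : ℕ, n ≠ 1 → IsEmpty (L.Relations n))
    {M : Type w} {M' : Type w'} [L.Structure M] [L.Structure M'] {N : ℕ}
    (hcount : ∀ c : ↥P → Prop, ∀ k ≤ N, HasAtLeast P M c k ↔ HasAtLeast P M' c k) :
    ∀ {n} (ψ : L.BoundedFormula Empty n), rels1 ψ ⊆ P → n + depth ψ ≤ N →
      ∀ (v : Fin n → M) (v' : Fin n → M'),
      (∀ i, col P M (v i) = col P M' (v' i)) →
      (∀ i j, v i = v j ↔ v' i = v' j) →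
      (ψ.Realize Empty.elim v ↔ ψ.Realize Empty.elim v') := by
  intro n ψ
  induction ψ with
  | falsum => intro _ _ v v' _ _; exact Iff.rfl
  | equal t₁ t₂ =>
    intro _ _ v v' hcol hpat
    obtain ⟨x₁, rfl⟩ := term_eq_var t₁
    obtain ⟨x₂, rfl⟩ := term_eq_var t₂
    rcases x₁ with e | i
    · exact e.elim
    rcases x₂ with e | j
    · exact e.elim
    simpa [BoundedFormula.Realize, Term.realize] using hpat i j
  | @rel n l R ts =>
    match l, R, ts with
    | 0, R, ts => exact (hmon 0 (by simp)).elim R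
    | (l + 2), R, ts => exact (hmon (l + 2) (by simp)).elim R
    | 1, R, ts =>
    intro hsub _ v v' hcol _
    have hR : R ∈ P := hsub (by simp [rels1])
    obtain ⟨x, hx⟩ := term_eq_var (ts 0)
    rcases x with e | i
    · exact e.elim
    show Structure.RelMap R (fun k => Term.realize (Sum.elim Empty.elim v) (ts k)) ↔
      Structure.RelMap R (fun k => Term.realize (Sum.elim Empty.elim v') (ts k))
    have e1 : (fun k : Fin 1 => Term.realize (Sum.elim Empty.elim v) (ts k)) = ![v i] := by
      funext k
      rw [Subsingleton.elim k 0, hx]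
      simp [Term.realize]
    have e2 : (fun k : Fin 1 => Term.realize (Sum.elim Empty.elim v') (ts k)) = ![v' i] := by
      funext k
      rw [Subsingleton.elim k 0, hx]
      simp [Term.realize]
    rw [e1, e2]
    exact iff_of_eq (congrFun (hcol i) ⟨R, hR⟩)
  | imp f g ihf ihg =>
    intro hsub hd v v' hcol hpat
    simp only [BoundedFormula.realize_imp]
    rw [ihf (fun x hx => hsub (Or.inl hx)) (by simp only [depth] at hd ⊢; omega) v v' hcol hpat,
      ihg (fun x hx => hsub (Or.inr hx)) (by simp only [depth] at hd ⊢; omega) v v' hcol hpat]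
  | @all n f ih =>
    intro hsub hd v v' hcol hpat
    have hd' : (n + 1) + depth f ≤ N := by simp only [depth] at hd; omega
    have hn1 : n + 1 ≤ N := by simp only [depth] at hd; omega
    simp only [BoundedFormula.realize_all]
    constructor
    · intro h a'
      obtain ⟨a, hca, hpa⟩ := extend P (fun c k hk => (hcount c k hk).symm) hn1 v' v
        (fun i => (hcol i).symm) (fun i j => (hpat i j).symm) a'
      exact (ih hsub hd' (Fin.snoc v a) (Fin.snoc v' a')
        (snoc_col P hcol hca.symm)
        (snoc_pat hpat (fun i => (hpa i).symm))).mp (h a)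
    · intro h a
      obtain ⟨a', hca, hpa⟩ := extend P hcount hn1 v v' hcol hpat a
      exact (ih hsub hd' (Fin.snoc v a) (Fin.snoc v' a')
        (snoc_col P hcol hca) (snoc_pat hpat hpa)).mpr (h a')


section Counting

theorem realize_atom {M : Type w} [L.Structure M] (R : L.Relations 1) {k : ℕ} (i : Fin k)
    (v0 : Empty → M) (xs : Fin k → M) :
    (BoundedFormula.rel R ![Term.var (Sum.inr i)]).Realize v0 xs ↔
      Structure.RelMap R ![xs i] := by
  have e : (fun j : Fin 1 => Term.realize (Sum.elim v0 xs) ((![Term.var (Sum.inr i)] : Fin 1 → L.Term (Empty ⊕ Fin k)) j))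
      = ![xs i] := by
    funext j
    rw [Subsingleton.elim j 0]
    simp [Term.realize]
  show Structure.RelMap R _ ↔ _
  rw [e]

variable [Fintype ↥P]

open Classical in
/-- formula saying that variable `i` has color `c` -/
noncomputable def colorFml (c : ↥P → Prop) {k : ℕ} (i : Fin k) : L.BoundedFormula Empty k :=
  BoundedFormula.iInf fun p : ↥P =>
    if c p then BoundedFormula.rel (p : L.Relations 1) ![Term.var (Sum.inr i)]
    else ∼(BoundedFormula.rel (p : L.Relations 1) ![Term.var (Sum.inr i)])

theorem realize_colorFml {M : Type w} [L.Structure M] (c : ↥P → Prop) {k : ℕ} (i : Fin k)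
    (v0 : Empty → M) (xs : Fin k → M) :
    (colorFml P c i).Realize v0 xs ↔ col P M (xs i) = c := by
  rw [colorFml, BoundedFormula.realize_iInf]
  constructor
  · intro h
    funext p
    have hp := h p
    by_cases hcp : c p
    · rw [if_pos hcp, realize_atom] at hp
      exact propext ⟨fun _ => hcp, fun _ => hp⟩
    · rw [if_neg hcp, BoundedFormula.realize_not, realize_atom] at hp
      exact propext ⟨fun h2 => absurd h2 hp, fun h2 => absurd h2 hcp⟩
  · intro h p
    have hp : Structure.RelMap (p : L.Relations 1) ![xs i] = c p := congrFun h p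
    by_cases hcp : c p
    · rw [if_pos hcp, realize_atom, hp]; exact hcp
    · rw [if_neg hcp, BoundedFormula.realize_not, realize_atom, hp]; exact hcp

open Classical in
/-- formula saying that all variables are distinct -/
noncomputable def distinctFml (k : ℕ) : L.BoundedFormula Empty k :=
  BoundedFormula.iInf fun pr : Fin k × Fin k =>
    if pr.1 = pr.2 then ⊤
    else ∼(Term.bdEqual (Term.var (Sum.inr pr.1)) (Term.var (Sum.inr pr.2)))

theorem realize_distinctFml {M : Type w} [L.Structure M] {k : ℕ}
    (v0 : Empty → M) (xs : Fin k → M) :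
    (distinctFml (L := L) k).Realize v0 xs ↔ Function.Injective xs := by
  rw [distinctFml, BoundedFormula.realize_iInf]
  constructor
  · intro h i j hij
    by_contra hne
    have hp := h (i, j)
    rw [if_neg hne, BoundedFormula.realize_not, BoundedFormula.realize_bdEqual] at hp
    exact hp (by simpa [Term.realize] using hij)
  · intro h pr
    by_cases he : pr.1 = pr.2
    · rw [if_pos he]; exact BoundedFormula.realize_top.mpr trivial
    · rw [if_neg he, BoundedFormula.realize_not, BoundedFormula.realize_bdEqual]
      intro hc
      exact he (h (by simpa [Term.realize] using hc))

/-- sentence: there are at least `k` elements of color `c` -/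
noncomputable def atLeast (c : ↥P → Prop) (k : ℕ) : L.Sentence :=
  BoundedFormula.exs
    ((BoundedFormula.iInf fun i : Fin k => colorFml P c i) ⊓ distinctFml k)

theorem realize_atLeast {M : Type (max u v)} [L.Structure M] (c : ↥P → Prop) (k : ℕ) :
    M ⊨ atLeast P c k ↔ HasAtLeast P M c k := by
  rw [Sentence.Realize, atLeast, BoundedFormula.realize_exs]
  constructor
  · rintro ⟨xs, hxs⟩
    rw [BoundedFormula.realize_inf, BoundedFormula.realize_iInf] at hxs
    refine ⟨xs, (realize_distinctFml _ _).mp hxs.2, fun i => ?_⟩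
    exact (realize_colorFml P c i _ xs).mp (hxs.1 i)
  · rintro ⟨f, hinj, hc⟩
    refine ⟨f, ?_⟩
    rw [BoundedFormula.realize_inf, BoundedFormula.realize_iInf]
    exact ⟨fun i => (realize_colorFml P c i _ f).mpr (hc i),
      (realize_distinctFml _ _).mpr hinj⟩

end Counting

section Sub

theorem sub_col {M : Type w} [L.Structure M] (S : L.Substructure M) (x : ↥S) :
    col P (↥S) x = col P M (x : M) := by
  funext p
  show Structure.RelMap (p : L.Relations 1) (fun i => ((![x] i : ↥S) : M)) = _
  congr 1
  funext i
  rw [Subsingleton.elim i 0]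
  rfl

theorem hasAtLeast_of_sub {M : Type w} [L.Structure M] {S : L.Substructure M}
    {c : ↥P → Prop} {k : ℕ} (h : HasAtLeast P (↥S) c k) : HasAtLeast P M c k := by
  obtain ⟨f, hinj, hc⟩ := h
  exact ⟨fun i => (f i : M), fun i j hij => hinj (Subtype.ext hij),
    fun i => by rw [← sub_col P S (f i)]; exact hc i⟩

theorem sentence_realize_iff {M : Type w} [L.Structure M] (ψ : L.Sentence) :
    M ⊨ ψ ↔ BoundedFormula.Realize ψ (Empty.elim : Empty → M) (fun i => i.elim0) := by
  rw [Sentence.Realize, Formula.Realize]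
  rw [Subsingleton.elim (default : Empty → M) Empty.elim,
    Subsingleton.elim (default : Fin 0 → M) (fun i => i.elim0)]

end Sub

end ThetaMonadic

open ThetaMonadic in
theorem theta_expressible_of_purely_monadic
    {L : FirstOrder.Language.{u, v}} [L.IsRelational]
    (hmon : ∀ n : ℕ, n ≠ 1 → IsEmpty (L.Relations n))
    (φ : L.Sentence) :
    ∃ χ : L.Sentence,
      ∀ (M : Type (max u v)) [L.Structure M] [Nonempty M],
        M ⊨ χ ↔ ∃ S : L.Substructure M, Nonempty S ∧ S ⊨ φ := by
  classical
  set P : Set (L.Relations 1) := rels1 (φ : L.BoundedFormula Empty 0) with hPdef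
  haveI : Fintype ↥P := (rels1_finite (φ : L.BoundedFormula Empty 0)).fintype
  set N : ℕ := depth (φ : L.BoundedFormula Empty 0) + 1 with hNdef
  set Good : ((↥P → Prop) → Fin (N + 1)) → Prop := fun J =>
    (∃ c, 0 < (J c : ℕ)) ∧
      ∃ (W : Type (max u v)) (_ : L.Structure W),
        (∀ c : ↥P → Prop, ∀ k ≤ N, HasAtLeast P W c k ↔ k ≤ (J c : ℕ)) ∧ W ⊨ φ
    with hGooddef
  refine ⟨BoundedFormula.iSup
    (fun J : ↥(Finset.univ.filter Good) => BoundedFormula.iInf fun c => atLeast P c (J.1 c)), ?_⟩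
  intro M _ _
  have hχ : (M ⊨ BoundedFormula.iSup
      (fun J : ↥(Finset.univ.filter Good) => BoundedFormula.iInf fun c => atLeast P c (J.1 c))) ↔
      ∃ J ∈ Finset.univ.filter Good, ∀ c : ↥P → Prop, M ⊨ atLeast P c (J c) := by
    rw [Sentence.Realize, Formula.Realize, BoundedFormula.realize_iSup]
    constructor
    · rintro ⟨⟨J, hJ⟩, h⟩
      exact ⟨J, hJ, fun c => BoundedFormula.realize_iInf.mp h c⟩
    · rintro ⟨J, hJ, h⟩
      exact ⟨⟨J, hJ⟩, BoundedFormula.realize_iInf.mpr fun c => h c⟩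
  rw [hχ]
  constructor
  · rintro ⟨J, hJgood, hall⟩
    rw [Finset.mem_filter, hGooddef] at hJgood
    obtain ⟨-, ⟨c₀, hc₀⟩, W, instW, hW, hWφ⟩ := hJgood
    have h1 : ∀ c : ↥P → Prop, HasAtLeast P M c (J c) := fun c =>
      (realize_atLeast P c (J c)).mp (hall c)
    simp only [HasAtLeast] at h1
    choose f hfin hfc using h1
    set s : Set M := ⋃ c : ↥P → Prop, Set.range (f c) with hsdef
    set S : L.Substructure M := ⟨s, fun {n} fn => isEmptyElim fn⟩ with hSdef
    have key : ∀ (c : ↥P → Prop) (k : ℕ), HasAtLeast P (↥S) c k ↔ k ≤ (J c : ℕ) := by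
      intro c k
      constructor
      · rintro ⟨g, ginj, gc⟩
        have hrange : ∀ j, ∃ i : Fin ((J c : ℕ)), f c i = (g j : M) := by
          intro j
          have hmem : (g j : M) ∈ s := (g j).2
          obtain ⟨c', i, hi⟩ := Set.mem_iUnion.mp hmem
          have hcc : c' = c := by
            have h2 : col P M (f c' i) = c' := hfc c' i
            have h3 : col P M (g j : M) = c := by
              rw [← sub_col P S (g j)]; exact gc j
            rw [hi, h3] at h2
            exact h2.symm
          exact ⟨hcc ▸ i, by rw [← hi]; cases hcc; rfl⟩
        set h := fun j => (hrange j).choose with hhdef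
        have hspec : ∀ j, f c (h j) = (g j : M) := fun j => (hrange j).choose_spec
        have hinj : Function.Injective h := by
          intro a b hab
          apply ginj
          apply Subtype.ext
          rw [← hspec a, ← hspec b, hab]
        simpa using Fintype.card_le_of_injective h hinj
      · intro hk
        refine ⟨fun j => ⟨f c (Fin.castLE hk j), ?_⟩, ?_, ?_⟩
        · exact Set.mem_iUnion.mpr ⟨c, Set.mem_range_self _⟩
        · intro a b hab
          exact Fin.castLE_injective hk (hfin c (congrArg Subtype.val hab))
        · intro j
          rw [sub_col P S]
          exact hfc c _
    haveI hSne : Nonempty ↥S :=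
      ⟨⟨f c₀ ⟨0, hc₀⟩, Set.mem_iUnion.mpr ⟨c₀, Set.mem_range_self _⟩⟩⟩
    have hcount : ∀ c : ↥P → Prop, ∀ k ≤ N, HasAtLeast P (↥S) c k ↔ HasAtLeast P W c k :=
      fun c k hk => (key c k).trans (hW c k hk).symm
    have hinv := invariance P hmon hcount (φ : L.BoundedFormula Empty 0)
      (by rw [hPdef]) (by rw [hNdef]; omega)
      (fun i => i.elim0) (fun i => i.elim0) (fun i => i.elim0) (fun i j => i.elim0)
    refine ⟨S, hSne, ?_⟩
    rw [sentence_realize_iff]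
    exact hinv.mpr ((sentence_realize_iff (L := L) φ (M := W)).mp hWφ)
  · rintro ⟨S, hSne, hSφ⟩
    haveI := hSne
    set J0 : (↥P → Prop) → ℕ := fun c => Nat.findGreatest (fun k => HasAtLeast P (↥S) c k) N
      with hJ0def
    have hJ0le : ∀ c, J0 c ≤ N := fun c => Nat.findGreatest_le N
    have hJ0spec : ∀ c, HasAtLeast P (↥S) c (J0 c) := fun c =>
      Nat.findGreatest_spec (Nat.zero_le N) (hasAtLeast_zero P (↥S) c)
    have key : ∀ (c : ↥P → Prop), ∀ k ≤ N, HasAtLeast P (↥S) c k ↔ k ≤ J0 c := by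
      intro c k hk
      exact ⟨fun h => Nat.le_findGreatest hk h, fun h => hasAtLeast_mono P (hJ0spec c) h⟩
    set J : (↥P → Prop) → Fin (N + 1) := fun c => ⟨J0 c, Nat.lt_succ_of_le (hJ0le c)⟩
      with hJdef
    refine ⟨J, Finset.mem_filter.mpr ⟨Finset.mem_univ _, ?_⟩, ?_⟩
    · rw [hGooddef]
      constructor
      · set a : ↥S := Classical.arbitrary ↥S
        refine ⟨col P (↥S) a, ?_⟩
        have h1 : HasAtLeast P (↥S) (col P (↥S) a) 1 :=
          ⟨fun _ => a, fun x y _ => Subsingleton.elim x y, fun _ => rfl⟩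
        have hN1 : 1 ≤ N := by rw [hNdef]; omega
        exact Nat.le_findGreatest hN1 h1
      · exact ⟨↥S, inferInstance, fun c k hk => key c k hk, hSφ⟩
    · intro c
      rw [realize_atLeast]
      exact hasAtLeast_of_sub P (hJ0spec c)
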